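/- Let λ, σ be nonzero complex numbers and η a complex number. Define operators on ℂ[X,Y]: L_m f(X,Y) = λ^m (Y - mX + mη) f(X, Y-m), H_m f(X,Y) = λ^m X f(X, Y-m), I_m f(X,Y) = λ^m σ f(X-1, Y-m), J_m f = 0, for m ∈ ℤ. Then these operators satisfy the planar Galilean conformal algebra relations: [L_m, L_n] = (n-m)L_{m+n}, [L_m, H_n] = n H_{m+n}, [L_m, I_n] = (n-m) I_{m+n}, [H_m, I_n] = I_{m+n}, and [H_m, H_n] = [I_m, I_n] = 0 as operators on ℂ[X,Y]. -/

import Mathlib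

open MvPolynomial

/-- Substitution `f(X,Y) ↦ f(X, Y-m)` on `ℂ[X,Y]`, as a linear map. -/
noncomputable def subYm (m : ℂ) : MvPolynomial (Fin 2) ℂ →ₗ[ℂ] MvPolynomial (Fin 2) ℂ :=
  (aeval ![X 0, X 1 - C m] : MvPolynomial (Fin 2) ℂ →ₐ[ℂ] MvPolynomial (Fin 2) ℂ).toLinearMap

/-- Substitution `f(X,Y) ↦ f(X-1, Y-m)` on `ℂ[X,Y]`, as a linear map. -/
noncomputable def subXYm (m : ℂ) : MvPolynomial (Fin 2) ℂ →ₗ[ℂ] MvPolynomial (Fin 2) ℂ :=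
  (aeval ![X 0 - 1, X 1 - C m] : MvPolynomial (Fin 2) ℂ →ₐ[ℂ] MvPolynomial (Fin 2) ℂ).toLinearMap

/-- `L_m f(X,Y) = λ^m (Y - mX + mη) f(X, Y-m)`. -/
noncomputable def opL (lam eta : ℂ) (m : ℤ) :
    MvPolynomial (Fin 2) ℂ →ₗ[ℂ] MvPolynomial (Fin 2) ℂ :=
  lam ^ m • (LinearMap.mulLeft ℂ (X 1 - (m : ℂ) • X 0 + C ((m : ℂ) * eta)) ∘ₗ subYm (m : ℂ))

/-- `H_m f(X,Y) = λ^m X f(X, Y-m)`. -/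
noncomputable def opH (lam : ℂ) (m : ℤ) :
    MvPolynomial (Fin 2) ℂ →ₗ[ℂ] MvPolynomial (Fin 2) ℂ :=
  lam ^ m • (LinearMap.mulLeft ℂ (X 0) ∘ₗ subYm (m : ℂ))

/-- `I_m f(X,Y) = λ^m σ f(X-1, Y-m)`. -/
noncomputable def opI (lam sig : ℂ) (m : ℤ) :
    MvPolynomial (Fin 2) ℂ →ₗ[ℂ] MvPolynomial (Fin 2) ℂ :=
  (lam ^ m * sig) • subXYm (m : ℂ)

lemma subYm_mul (m : ℂ) (p q : MvPolynomial (Fin 2) ℂ) :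
    subYm m (p * q) = subYm m p * subYm m q := by simp [subYm]

lemma subXYm_mul (m : ℂ) (p q : MvPolynomial (Fin 2) ℂ) :
    subXYm m (p * q) = subXYm m p * subXYm m q := by simp [subXYm]

lemma subYm_X0 (m : ℂ) : subYm m (X 0) = X 0 := by simp [subYm]
lemma subYm_X1 (m : ℂ) : subYm m (X 1) = X 1 - C m := by simp [subYm]
lemma subYm_C (m a : ℂ) : subYm m (C a) = C a := by simp [subYm]
lemma subXYm_X0 (m : ℂ) : subXYm m (X 0) = X 0 - 1 := by simp [subXYm]
lemma subXYm_X1 (m : ℂ) : subXYm m (X 1) = X 1 - C m := by simp [subXYm]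
lemma subXYm_C (m a : ℂ) : subXYm m (C a) = C a := by simp [subXYm]

lemma subYm_subYm (m n : ℂ) (f : MvPolynomial (Fin 2) ℂ) :
    subYm m (subYm n f) = subYm (m + n) f := by
  simp only [subYm, AlgHom.toLinearMap_apply]
  rw [← AlgHom.comp_apply]
  congr 1
  apply MvPolynomial.algHom_ext
  intro i
  fin_cases i <;> simp <;> ring

lemma subYm_subXYm (m n : ℂ) (f : MvPolynomial (Fin 2) ℂ) :
    subYm m (subXYm n f) = subXYm (m + n) f := by
  simp only [subYm, subXYm, AlgHom.toLinearMap_apply]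
  rw [← AlgHom.comp_apply]
  congr 1
  apply MvPolynomial.algHom_ext
  intro i
  fin_cases i <;> simp <;> ring

lemma subXYm_subYm (m n : ℂ) (f : MvPolynomial (Fin 2) ℂ) :
    subXYm m (subYm n f) = subXYm (m + n) f := by
  simp only [subYm, subXYm, AlgHom.toLinearMap_apply]
  rw [← AlgHom.comp_apply]
  congr 1
  apply MvPolynomial.algHom_ext
  intro i
  fin_cases i <;> simp <;> ring

lemma subXYm_subXYm (m n : ℂ) (f : MvPolynomial (Fin 2) ℂ) :
    subXYm m (subXYm n f) = subXYm n (subXYm m f) := by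
  simp only [subXYm, AlgHom.toLinearMap_apply]
  rw [← AlgHom.comp_apply, ← AlgHom.comp_apply]
  refine DFunLike.congr_fun ?_ f
  apply MvPolynomial.algHom_ext
  intro i
  fin_cases i <;> simp <;> ring

theorem stmt15 (lam sig eta : ℂ) (hlam : lam ≠ 0) (hsig : sig ≠ 0) (m n : ℤ) :
    opL lam eta m ∘ₗ opL lam eta n - opL lam eta n ∘ₗ opL lam eta m
        = ((n : ℂ) - (m : ℂ)) • opL lam eta (m + n) ∧
    opL lam eta m ∘ₗ opH lam n - opH lam n ∘ₗ opL lam eta m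
        = (n : ℂ) • opH lam (m + n) ∧
    opL lam eta m ∘ₗ opI lam sig n - opI lam sig n ∘ₗ opL lam eta m
        = ((n : ℂ) - (m : ℂ)) • opI lam sig (m + n) ∧
    opH lam m ∘ₗ opI lam sig n - opI lam sig n ∘ₗ opH lam m = opI lam sig (m + n) ∧
    opH lam m ∘ₗ opH lam n - opH lam n ∘ₗ opH lam m = 0 ∧
    opI lam sig m ∘ₗ opI lam sig n - opI lam sig n ∘ₗ opI lam sig m = 0 := by
  refine ⟨?_, ?_, ?_, ?_, ?_, ?_⟩ <;>
  · ext f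
    simp only [opL, opH, opI, LinearMap.sub_apply, LinearMap.comp_apply, LinearMap.smul_apply,
      map_smul, LinearMap.mulLeft_apply, map_add, map_sub, LinearMap.map_smul,
      subYm_mul, subYm_X0, subYm_X1, subYm_C, subXYm_mul, subXYm_X0, subXYm_X1, subXYm_C,
      subYm_subYm, subYm_subXYm, subXYm_subYm, subXYm_subXYm,
      zpow_add₀ hlam, smul_eq_C_mul, map_mul, C_add, C_sub, C_mul, map_one,
      LinearMap.zero_apply]
    push_cast
    try simp only [C_add, C_sub, C_mul]
    ring
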